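/- Let H be a finite group and let σ ∈ Aut(H) satisfy σ² = id. Form the semidirect product G = H ⋊_θ ℤ₂, where ℤ₂ = {e,x} and θ(x) = σ, and let S(H,σ) = {g ∈ G : g ∉ H × {e} and g² = e}. Then every conjugacy class of G that is contained in S(H,σ) contains an element of the form x·h₀ with h₀ ∈ H whose order is a power of 2 (i.e. ord(h₀) = 2^k for some k ≥ 0). -/

import Mathlib

/-- Let H be a finite group, σ an involutive automorphism of H, and
G = H ⋊_θ ℤ₂ the semidirect product in which the nontrivial element x of ℤ₂ acts
on H by σ. Every element of G of order two lying outside H (i.e. every element of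
S(H,σ)) is conjugate in G to an element of the form x·h₀ where the order of h₀ in H
is a power of 2. -/
theorem stmt_19 {H : Type*} [Group H] [Finite H] (σ : MulAut H) (hσ : σ * σ = 1)
    (θ : Multiplicative (ZMod 2) →* MulAut H)
    (hθ : θ (Multiplicative.ofAdd (1 : ZMod 2)) = σ)
    (g : H ⋊[θ] Multiplicative (ZMod 2))
    (hg₁ : g ∉ (SemidirectProduct.inl : H →* H ⋊[θ] Multiplicative (ZMod 2)).range)
    (hg₂ : g ^ 2 = 1) :
    ∃ (h₀ : H) (k : ℕ), orderOf h₀ = 2 ^ k ∧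
      IsConj g
        (SemidirectProduct.inr (Multiplicative.ofAdd (1 : ZMod 2)) *
          SemidirectProduct.inl h₀) := by
  classical
  set x : Multiplicative (ZMod 2) := Multiplicative.ofAdd 1 with hx
  have hxg : g.right = x := by
    have hne : g.right ≠ 1 := by
      intro h1
      exact hg₁ ⟨g.left, by ext <;> simp [h1]⟩
    revert hne
    generalize g.right = y
    revert y; decide
  set h : H := g.left with hh
  have hσh : σ h = h⁻¹ := by
    have h1 : h * σ h = 1 := by
      have := congrArg SemidirectProduct.left hg₂
      simpa [pow_two, SemidirectProduct.mul_left, hxg, hθ] using this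
    exact eq_inv_of_mul_eq_one_right h1
  have hn0 : orderOf h ≠ 0 := (orderOf_pos h).ne'
  set n := orderOf h with hn
  set k := n.factorization 2 with hk
  set m := n / 2 ^ k with hm
  have hmul : 2 ^ k * m = n := Nat.ordProj_mul_ordCompl_eq_self n 2
  have hm0 : m ≠ 0 := by
    intro h0
    rw [h0, mul_zero] at hmul
    exact hn0 hmul.symm
  have h2m : ¬ (2 ∣ m) := Nat.not_dvd_ordCompl Nat.prime_two hn0
  have hmodd : Odd m := Nat.odd_iff.2 (Nat.two_dvd_ne_zero.1 h2m)
  obtain ⟨t, ht⟩ := hmodd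
  have hmdvd : m ∣ n := Nat.ordCompl_dvd n 2
  have hord : orderOf ((h ^ m)⁻¹) = 2 ^ k := by
    rw [orderOf_inv, orderOf_pow]
    rw [Nat.gcd_eq_right hmdvd]
    show n / m = 2 ^ k
    rw [← hmul, Nat.mul_div_cancel _ (Nat.pos_of_ne_zero hm0)]
  refine ⟨(h ^ m)⁻¹, k, hord, ?_⟩
  rw [isConj_iff]
  refine ⟨SemidirectProduct.inl (h ^ t), ?_⟩
  have hσpow : ∀ j : ℕ, σ (h ^ j) = (h ^ j)⁻¹ := by
    intro j
    rw [map_pow, hσh, inv_pow]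
  ext
  · simp only [SemidirectProduct.mul_left, SemidirectProduct.mul_right,
      SemidirectProduct.left_inl, SemidirectProduct.right_inl, map_one,
      MulAut.one_apply, hxg, hθ, SemidirectProduct.inv_left,
      SemidirectProduct.inv_right, SemidirectProduct.left_inr,
      SemidirectProduct.right_inr, inv_one, one_mul, mul_one]
    rw [map_inv, map_inv, hσpow, hσpow, inv_inv, inv_inv, ← hh]
    rw [mul_assoc, ← pow_succ', ← pow_add]
    congr 1
    omega
  · simp [SemidirectProduct.mul_right, SemidirectProduct.right_inl,
      SemidirectProduct.right_inr, hxg, ← map_pow, ← map_inv]
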